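/- Let g : [a, b] → ℝ be square-integrable, and for each i = 1, …, N define α_i(x) = ((y_i − y_{i−1})x + (x_i y_{i−1} − x_{i−1} y_i)) / (x_i − x_{i−1}), β_i(x) = ((y_N − y_0)x + (x_i y_0 − x_{i−1} y_N)) / (x_i − x_{i−1}), γ_i(x) = ((b − a)x + (x_i a − x_{i−1} b)) / (x_i − x_{i−1}). Assume that for every i, ∫_{x_{i−1}}^{x_i} (β_i(x) − g(γ_i(x)))² dx > 0. Then the functional F(d_1, …, d_N) = Σ_{i=1}^{N} ∫_{x_{i−1}}^{x_i} (g(x) − α_i(x) + d_i(β_i(x) − g(γ_i(x))))² dx attains its global minimum over ℝ^N at the unique point given by d_i = ∫_{x_{i−1}}^{x_i} (α_i(x) − g(x))(β_i(x) − g(γ_i(x))) dx / ∫_{x_{i−1}}^{x_i} (β_i(x) − g(γ_i(x)))² dx for i = 1, …, N. -/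

import Mathlib

open MeasureTheory

/-- The collage functional `F(d₁,…,d_N) = Σᵢ ∫_{x_{i−1}}^{x_i} (g − αᵢ + dᵢ(βᵢ − g∘γᵢ))² dx`
attains its global minimum over `ℝᴺ` at the unique point given by
`dᵢ = ∫ (αᵢ − g)(βᵢ − g∘γᵢ) / ∫ (βᵢ − g∘γᵢ)²`. -/
theorem collage_functional_minimizer
    (a b : ℝ) (hab : a < b) (N : ℕ) (hN : 2 ≤ N)
    (x y : ℕ → ℝ) (hxa : x 0 = a) (hxb : x N = b)
    (hmono : ∀ j, j < N → x j < x (j + 1))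
    (g : ℝ → ℝ) (hg : MemLp g 2 (volume.restrict (Set.Icc a b))) :
    let α : ℕ → ℝ → ℝ := fun i t =>
      ((y i - y (i - 1)) * t + (x i * y (i - 1) - x (i - 1) * y i)) / (x i - x (i - 1))
    let β : ℕ → ℝ → ℝ := fun i t =>
      ((y N - y 0) * t + (x i * y 0 - x (i - 1) * y N)) / (x i - x (i - 1))
    let γ : ℕ → ℝ → ℝ := fun i t =>
      ((b - a) * t + (x i * a - x (i - 1) * b)) / (x i - x (i - 1))
    let F : (ℕ → ℝ) → ℝ := fun d =>
      ∑ i ∈ Finset.Icc 1 N,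
        ∫ t in (x (i - 1))..(x i), (g t - α i t + d i * (β i t - g (γ i t))) ^ 2
    let dopt : ℕ → ℝ := fun i =>
      (∫ t in (x (i - 1))..(x i), (α i t - g t) * (β i t - g (γ i t))) /
        (∫ t in (x (i - 1))..(x i), (β i t - g (γ i t)) ^ 2)
    (∀ i, 1 ≤ i → i ≤ N → 0 < ∫ t in (x (i - 1))..(x i), (β i t - g (γ i t)) ^ 2) →
    (∀ d : ℕ → ℝ, F dopt ≤ F d) ∧
    (∀ d : ℕ → ℝ, F d = F dopt → ∀ i, 1 ≤ i → i ≤ N → d i = dopt i) := by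
  intro α β γ F dopt hpos
  -- a strongly measurable representative of `g`
  set G : ℝ → ℝ := hg.1.mk g with hGdef
  have hGsm : StronglyMeasurable G := hg.1.stronglyMeasurable_mk
  have hgG : g =ᵐ[volume.restrict (Set.Icc a b)] G := hg.1.ae_eq_mk
  have hGmem : MemLp G 2 (volume.restrict (Set.Icc a b)) := hg.ae_eq hgG
  -- monotonicity of the partition points
  have hxle : ∀ j k, j ≤ k → k ≤ N → x j ≤ x k := by
    intro j k hjk hkN
    induction k, hjk using Nat.le_induction with
    | base => exact le_rfl
    | succ n hn ih =>
      exact le_trans (ih (by omega)) (hmono n (by omega)).le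
  have hxmem : ∀ j, j ≤ N → x j ∈ Set.Icc a b := fun j hj =>
    ⟨hxa ▸ hxle 0 j (Nat.zero_le _) hj, hxb ▸ hxle j N hj le_rfl⟩
  -- the key per-interval identity
  have key : ∀ i, 1 ≤ i → i ≤ N → ∀ c : ℝ,
      (∫ t in (x (i-1))..(x i), (g t - α i t + c * (β i t - g (γ i t))) ^ 2)
      = (∫ t in (x (i-1))..(x i), (g t - α i t + dopt i * (β i t - g (γ i t))) ^ 2)
        + (∫ t in (x (i-1))..(x i), (β i t - g (γ i t)) ^ 2) * (c - dopt i)^2 := by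
    intro i hi1 hiN c
    have hi1' : i - 1 + 1 = i := by omega
    have hlt : x (i-1) < x i := by
      have := hmono (i-1) (by omega); rwa [hi1'] at this
    have hc0 : (0:ℝ) < x i - x (i-1) := sub_pos.mpr hlt
    set s : Set ℝ := Set.Ioc (x (i-1)) (x i) with hs
    set μi := volume.restrict s with hμi
    have hsub : s ⊆ Set.Icc a b := by
      intro t ht
      exact ⟨le_trans (hxmem (i-1) (by omega)).1 ht.1.le, le_trans ht.2 (hxmem i hiN).2⟩
    -- γ i maps s into [a, b]
    have hγmem : ∀ t ∈ s, γ i t ∈ Set.Icc a b := by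
      intro t ht
      have h1 : x (i-1) ≤ t := ht.1.le
      have h2 : t ≤ x i := ht.2
      constructor
      · rw [le_div_iff₀ hc0]; nlinarith
      · rw [div_le_iff₀ hc0]; nlinarith
    -- γ i is quasi measure preserving
    have hk : (b - a)/(x i - x (i-1)) ≠ 0 := ne_of_gt (div_pos (sub_pos.mpr hab) hc0)
    have hγeq : γ i = fun t => ((b-a)/(x i - x (i-1))) * t
        + (x i * a - x (i-1)*b)/(x i - x (i-1)) := by
      funext t
      show ((b - a) * t + (x i * a - x (i - 1) * b)) / (x i - x (i - 1)) = _
      field_simp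
    have hγc : Continuous (γ i) := by rw [hγeq]; fun_prop
    have hQMP : Measure.QuasiMeasurePreserving (γ i) volume volume := by
      rw [hγeq]
      refine ⟨by fun_prop, ?_⟩
      have hcomp : (fun t => ((b-a)/(x i - x (i-1))) * t
          + (x i * a - x (i-1)*b)/(x i - x (i-1)))
          = (fun u => u + (x i * a - x (i-1)*b)/(x i - x (i-1)))
            ∘ (fun t => ((b-a)/(x i - x (i-1))) * t) := rfl
      rw [hcomp, ← Measure.map_map (by fun_prop) (by fun_prop),
        Real.map_volume_mul_left hk, Measure.map_smul, map_add_right_eq_self volume _]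
      exact Measure.smul_absolutelyContinuous
    -- a.e. replacement of g by G
    have hae1 : (fun t => g t) =ᵐ[μi] G :=
      hgG.filter_mono (ae_mono (Measure.restrict_mono hsub le_rfl))
    have hnull : ∀ᵐ t ∂(volume : Measure ℝ), t ∈ Set.Icc a b → g t = G t :=
      (ae_restrict_iff' measurableSet_Icc).mp hgG
    have hae2 : (fun t => g (γ i t)) =ᵐ[μi] (fun t => G (γ i t)) := by
      have h1 : ∀ᵐ t ∂(volume : Measure ℝ), γ i t ∈ Set.Icc a b → g (γ i t) = G (γ i t) :=
        hQMP.ae hnull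
      have h2 : ∀ᵐ t ∂μi, γ i t ∈ Set.Icc a b → g (γ i t) = G (γ i t) :=
        ae_restrict_of_ae h1
      filter_upwards [h2, ae_restrict_mem measurableSet_Ioc] with t h ht
      exact h (hγmem t ht)
    set u : ℝ → ℝ := fun t => G t - α i t with hu
    set v : ℝ → ℝ := fun t => β i t - G (γ i t) with hv
    have huae : (fun t => g t - α i t) =ᵐ[μi] u := by
      filter_upwards [hae1] with t h; simp only [hu]; rw [h]
    have hvae : (fun t => β i t - g (γ i t)) =ᵐ[μi] v := by
      filter_upwards [hae2] with t h; simp only [hv]; rw [h]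
    -- integrability facts
    have hαc : Continuous (α i) := by
      show Continuous (fun t => ((y i - y (i - 1)) * t
        + (x i * y (i - 1) - x (i - 1) * y i)) / (x i - x (i - 1)))
      fun_prop
    have hβc : Continuous (β i) := by
      show Continuous (fun t => ((y N - y 0) * t
        + (x i * y 0 - x (i - 1) * y N)) / (x i - x (i - 1)))
      fun_prop
    have hvaesm : AEStronglyMeasurable v μi :=
      (hβc.stronglyMeasurable.sub (hGsm.comp_measurable hγc.measurable)).aestronglyMeasurable
    have hvsq_g : Integrable (fun t => (β i t - g (γ i t))^2) μi := by
      by_contra hcon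
      have h0 := hpos i hi1 hiN
      rw [intervalIntegral.integral_of_le hlt.le] at h0
      rw [hs] at hμi
      rw [← hμi, integral_undef hcon] at h0
      exact lt_irrefl 0 h0
    have hvsq : Integrable (fun t => v t^2) μi := by
      refine hvsq_g.congr (hvae.mono fun t h => ?_)
      show (β i t - g (γ i t))^2 = v t^2
      rw [show β i t - g (γ i t) = v t from h]
    have hvmem : MemLp v 2 μi := (memLp_two_iff_integrable_sq hvaesm).mpr hvsq
    have humem : MemLp u 2 μi := by
      have h1 : MemLp G 2 μi := hGmem.mono_measure (Measure.restrict_mono hsub le_rfl)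
      have h2 : MemLp (α i) 2 μi := by
        refine (memLp_two_iff_integrable_sq hαc.aestronglyMeasurable).mpr ?_
        exact Continuous.integrableOn_Ioc (by fun_prop)
      exact h1.sub h2
    have husq : Integrable (fun t => u t^2) μi := humem.integrable_sq
    clear_value u v
    have huv : Integrable (fun t => u t * v t) μi := by
      refine Integrable.mono' ((husq.add hvsq).div_const 2) (humem.1.mul hvmem.1) ?_
      refine Filter.Eventually.of_forall fun t => ?_
      simp only [Pi.add_apply]
      rw [Real.norm_eq_abs, abs_mul]
      have hb : |u t| * |v t| ≤ (u t^2 + v t^2)/2 := by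
        nlinarith [sq_nonneg (|u t| - |v t|), sq_abs (u t), sq_abs (v t),
          abs_nonneg (u t), abs_nonneg (v t)]
      linarith
    -- expansion of the quadratic
    have hexp : ∀ e : ℝ,
        (∫ t in (x (i-1))..(x i), (g t - α i t + e * (β i t - g (γ i t))) ^ 2)
        = (∫ t, u t^2 ∂μi) + 2*e*(∫ t, u t * v t ∂μi) + e^2*(∫ t, v t^2 ∂μi) := by
      intro e
      rw [intervalIntegral.integral_of_le hlt.le, ← hμi]
      have hcongr : (fun t => (g t - α i t + e * (β i t - g (γ i t))) ^ 2)
          =ᵐ[μi] (fun t => u t^2 + (2*e)*(u t * v t) + e^2 * v t^2) := by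
        filter_upwards [huae, hvae] with t h1 h2
        have h1' : g t - α i t = u t := h1
        have h2' : β i t - g (γ i t) = v t := h2
        show (g t - α i t + e * (β i t - g (γ i t))) ^ 2
          = u t^2 + (2*e)*(u t * v t) + e^2 * v t^2
        rw [h1', h2']; ring
      have h12 : Integrable (fun t => u t^2 + (2*e)*(u t * v t)) μi :=
        husq.add (huv.const_mul (2*e))
      have h3 : Integrable (fun t => e^2 * v t^2) μi := hvsq.const_mul (e^2)
      rw [integral_congr_ae hcongr, integral_add h12 h3,
        integral_add husq (huv.const_mul (2*e)), integral_const_mul, integral_const_mul]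
    -- identification of `dopt i`
    have hEC : (∫ t in (x (i-1))..(x i), (β i t - g (γ i t)) ^ 2) = ∫ t, v t^2 ∂μi := by
      rw [intervalIntegral.integral_of_le hlt.le, ← hμi]
      refine integral_congr_ae (hvae.mono fun t h => ?_)
      show (β i t - g (γ i t))^2 = v t^2
      rw [show β i t - g (γ i t) = v t from h]
    have hEB : (∫ t in (x (i-1))..(x i), (α i t - g t) * (β i t - g (γ i t)))
        = -∫ t, u t * v t ∂μi := by
      rw [intervalIntegral.integral_of_le hlt.le, ← hμi, ← integral_neg]
      refine integral_congr_ae ?_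
      filter_upwards [huae, hvae] with t h1 h2
      have h1' : g t - α i t = u t := h1
      have h2' : β i t - g (γ i t) = v t := h2
      show (α i t - g t) * (β i t - g (γ i t)) = -(u t * v t)
      rw [show α i t - g t = -(u t) by linarith, h2']; ring
    have hCpos : 0 < ∫ t, v t^2 ∂μi := by rw [← hEC]; exact hpos i hi1 hiN
    have hdopt : dopt i = -(∫ t, u t*v t ∂μi)/(∫ t, v t^2 ∂μi) := by
      show (∫ t in (x (i-1))..(x i), (α i t - g t) * (β i t - g (γ i t))) /
        (∫ t in (x (i-1))..(x i), (β i t - g (γ i t)) ^ 2) = _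
      rw [hEB, hEC]
    rw [hexp c, hexp (dopt i), hEC, hdopt]
    have hCne : (∫ t, v t^2 ∂μi) ≠ 0 := ne_of_gt hCpos
    field_simp
    ring
  -- the decomposition of F
  have hkey2 : ∀ d : ℕ → ℝ, F d = F dopt
      + ∑ i ∈ Finset.Icc 1 N,
          (∫ t in (x (i-1))..(x i), (β i t - g (γ i t)) ^ 2) * (d i - dopt i)^2 := by
    intro d
    show (∑ i ∈ Finset.Icc 1 N, _) = (∑ i ∈ Finset.Icc 1 N, _) + _
    rw [← Finset.sum_add_distrib]
    refine Finset.sum_congr rfl fun i hi => ?_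
    obtain ⟨h1, h2⟩ := Finset.mem_Icc.mp hi
    exact key i h1 h2 (d i)
  have hnonneg : ∀ d : ℕ → ℝ, ∀ i ∈ Finset.Icc 1 N,
      0 ≤ (∫ t in (x (i-1))..(x i), (β i t - g (γ i t)) ^ 2) * (d i - dopt i)^2 := by
    intro d i hi
    obtain ⟨h1, h2⟩ := Finset.mem_Icc.mp hi
    exact mul_nonneg (hpos i h1 h2).le (sq_nonneg _)
  constructor
  · intro d
    rw [hkey2 d]
    exact le_add_of_nonneg_right (Finset.sum_nonneg (hnonneg d))
  · intro d hFd i h1 h2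
    have hsum0 : ∑ i ∈ Finset.Icc 1 N,
        (∫ t in (x (i-1))..(x i), (β i t - g (γ i t)) ^ 2) * (d i - dopt i)^2 = 0 := by
      have := hkey2 d
      rw [hFd] at this
      linarith
    have hterm := (Finset.sum_eq_zero_iff_of_nonneg (hnonneg d)).mp hsum0 i
      (Finset.mem_Icc.mpr ⟨h1, h2⟩)
    have hCpos := hpos i h1 h2
    have hsq0 : (d i - dopt i)^2 = 0 := by
      rcases mul_eq_zero.mp hterm with h | h
      · exact absurd h hCpos.ne'
      · exact h
    have : d i - dopt i = 0 := by
      have := sq_eq_zero_iff.mp hsq0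
      exact this
    linarith
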